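/- Suppose M is a maximal partial Latin square of order n > 1 containing exactly ⌈n²/2⌉ filled cells. Then, after suitable permutations of rows and columns, M consists of two Latin squares on disjoint symbol sets placed on the leading diagonal, of orders m and n−m where m = ⌊n/2⌋, and all other cells of M are empty. -/

import Mathlib

def IsPLS {n : ℕ} (M : Fin n → Fin n → Option (Fin n)) : Prop :=
  (∀ r c c' s, M r c = some s → M r c' = some s → c = c') ∧
  (∀ r r' c s, M r c = some s → M r' c = some s → r = r')

def IsMaximalPLS {n : ℕ} (M : Fin n → Fin n → Option (Fin n)) : Prop :=
  IsPLS M ∧ ∀ r c (s : Fin n), M r c = none →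
    ¬ IsPLS (fun r' c' => if r' = r ∧ c' = c then some s else M r' c')

def plsSize {n : ℕ} (M : Fin n → Fin n → Option (Fin n)) : ℕ :=
  (Finset.univ.filter (fun rc : Fin n × Fin n => (M rc.1 rc.2).isSome)).card

section Aux
variable {n : ℕ} (M : Fin n → Fin n → Option (Fin n))

def rowS (r : Fin n) : Finset (Fin n) := Finset.univ.filter fun s => ∃ c, M r c = some s
def colS (c : Fin n) : Finset (Fin n) := Finset.univ.filter fun s => ∃ r, M r c = some s

variable {M}

lemma mem_rowS {r s : Fin n} : s ∈ rowS M r ↔ ∃ c, M r c = some s := by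
  simp [rowS]

lemma mem_colS {c s : Fin n} : s ∈ colS M c ↔ ∃ r, M r c = some s := by
  simp [colS]

lemma rowS_card (hM : IsPLS M) (r : Fin n) :
    (rowS M r).card = (Finset.univ.filter fun c => (M r c).isSome).card := by
  apply Finset.card_bij (fun s hs => (mem_rowS.1 hs).choose)
  · intro s hs
    simp [(mem_rowS.1 hs).choose_spec]
  · intro s hs s' hs' h
    have h1 := (mem_rowS.1 hs).choose_spec
    have h2 := (mem_rowS.1 hs').choose_spec
    rw [h] at h1; rw [h1] at h2; exact Option.some_inj.1 h2
  · intro c hc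
    simp only [Finset.mem_filter, Finset.mem_univ, true_and] at hc
    obtain ⟨s, hs⟩ := Option.isSome_iff_exists.1 hc
    have hmem : s ∈ rowS M r := mem_rowS.2 ⟨c, hs⟩
    refine ⟨s, hmem, ?_⟩
    exact hM.1 r _ c s (mem_rowS.1 hmem).choose_spec hs

lemma colS_card (hM : IsPLS M) (c : Fin n) :
    (colS M c).card = (Finset.univ.filter fun r => (M r c).isSome).card := by
  apply Finset.card_bij (fun s hs => (mem_colS.1 hs).choose)
  · intro s hs
    simp [(mem_colS.1 hs).choose_spec]
  · intro s hs s' hs' h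
    have h1 := (mem_colS.1 hs).choose_spec
    have h2 := (mem_colS.1 hs').choose_spec
    rw [h] at h1; rw [h1] at h2; exact Option.some_inj.1 h2
  · intro r hr
    simp only [Finset.mem_filter, Finset.mem_univ, true_and] at hr
    obtain ⟨s, hs⟩ := Option.isSome_iff_exists.1 hr
    have hmem : s ∈ colS M c := mem_colS.2 ⟨r, hs⟩
    refine ⟨s, hmem, ?_⟩
    exact hM.2 _ r c s (mem_colS.1 hmem).choose_spec hs

lemma max_union (hM : IsMaximalPLS M) {r c : Fin n} (h : M r c = none) (s : Fin n) :
    s ∈ rowS M r ∨ s ∈ colS M c := by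
  by_contra hcon
  push_neg at hcon
  rw [mem_rowS, mem_colS] at hcon
  push_neg at hcon
  obtain ⟨hrow, hcol⟩ := hcon
  apply hM.2 r c s h
  constructor
  · intro x y y' t h1 h2
    simp only at h1 h2
    split_ifs at h1 h2 with p1 p2 p2
    · rw [p1.2, p2.2]
    · exfalso
      obtain ⟨hx, hy⟩ := p1
      subst hx
      rw [← Option.some_inj.1 h1] at h2
      exact hrow y' h2
    · exfalso
      obtain ⟨hx, hy⟩ := p2
      subst hx
      rw [← Option.some_inj.1 h2] at h1
      exact hrow y h1
    · exact hM.1.1 x y y' t h1 h2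
  · intro x x' y t h1 h2
    simp only at h1 h2
    split_ifs at h1 h2 with p1 p2 p2
    · rw [p1.1, p2.1]
    · exfalso
      obtain ⟨hx, hy⟩ := p1
      subst hy
      rw [← Option.some_inj.1 h1] at h2
      exact hcol x' h2
    · exfalso
      obtain ⟨hx, hy⟩ := p2
      subst hy
      rw [← Option.some_inj.1 h2] at h1
      exact hcol x h1
    · exact hM.1.2 x x' y t h1 h2


end Aux

lemma quad_le_int {N m a : ℤ} (h : N = 2*m ∨ N = 2*m+1) :
    a * (N - a) ≤ m * (N - m) ∧ (a * (N - a) = m * (N - m) → a = m ∨ a = N - m) := by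
  have key : 0 ≤ (m - a) * ((N - m) - a) := by
    rcases h with h | h
    · have : (m - a) * ((N - m) - a) = (m - a)^2 := by rw [h]; ring
      rw [this]; positivity
    · have : (m - a) * ((N - m) - a) = (m - a) * ((m - a) + 1) := by rw [h]; ring
      rw [this]
      rcases le_or_gt 0 (m - a) with hk | hk
      · exact mul_nonneg hk (by linarith)
      · nlinarith
  have hid : (m - a) * ((N - m) - a) = m * (N - m) - a * (N - a) := by ring
  constructor
  · linarith [hid ▸ key]
  · intro he
    have h0 : (m - a) * ((N - m) - a) = 0 := by rw [hid, he]; ring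
    rcases mul_eq_zero.1 h0 with h1 | h1
    · left; linarith
    · right; linarith

lemma quad_le_nat {n m a : ℕ} (hm : m = n / 2) (ha : a ≤ n) :
    a * (n - a) ≤ m * (n - m) ∧ (a * (n - a) = m * (n - m) → a = m ∨ a = n - m) := by
  have hmn : m ≤ n := hm ▸ Nat.div_le_self n 2
  have h2 : (n : ℤ) = 2*(m:ℤ) ∨ (n : ℤ) = 2*(m:ℤ)+1 := by
    rcases Nat.even_or_odd n with ⟨k, hk⟩ | ⟨k, hk⟩
    · left; subst hm; omega
    · right; subst hm; omega
  obtain ⟨hle, heq⟩ := quad_le_int (N := n) (m := m) (a := a) h2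
  constructor
  · zify [ha, hmn]
    exact hle
  · intro h
    have h' : (a:ℤ) * ((n:ℤ) - a) = (m:ℤ) * ((n:ℤ) - m) := by
      zify [ha, hmn] at h
      exact h
    rcases heq h' with h1 | h1
    · left; exact_mod_cast h1
    · right; omega

lemma exists_perm_pred {n : ℕ} (p q : Fin n → Prop) [DecidablePred p] [DecidablePred q]
    (h : Fintype.card {x // p x} = Fintype.card {x // q x}) :
    ∃ σ : Equiv.Perm (Fin n), ∀ x, p x ↔ q (σ x) := by
  have h' : Fintype.card {x // ¬ p x} = Fintype.card {x // ¬ q x} := by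
    rw [Fintype.card_subtype_compl, Fintype.card_subtype_compl, h]
  let e1 : {x // p x} ≃ {x // q x} := Fintype.equivOfCardEq h
  let e2 : {x // ¬ p x} ≃ {x // ¬ q x} := Fintype.equivOfCardEq h'
  refine ⟨(Equiv.sumCompl p).symm.trans ((e1.sumCongr e2).trans (Equiv.sumCompl q)), ?_⟩
  intro x
  by_cases hp : p x
  · simp only [Equiv.trans_apply, Equiv.sumCompl_symm_apply_of_pos hp,
      Equiv.sumCongr_apply, Sum.map_inl, Equiv.sumCompl_apply_inl]
    exact ⟨fun _ => (e1 ⟨x, hp⟩).2, fun _ => hp⟩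
  · simp only [Equiv.trans_apply, Equiv.sumCompl_symm_apply_of_neg hp,
      Equiv.sumCongr_apply, Sum.map_inr, Equiv.sumCompl_apply_inr]
    exact ⟨fun hc => absurd hc hp, fun hq => absurd hq (e2 ⟨x, hp⟩).2⟩

lemma card_filter_lt {n m : ℕ} (hm : m ≤ n) :
    (Finset.univ.filter fun i : Fin n => (i : ℕ) < m).card = m := by
  have : m = (Finset.univ : Finset (Fin m)).card := by simp
  conv_rhs => rw [this]
  symm
  apply Finset.card_bij (fun (i : Fin m) _ => (⟨(i : ℕ), lt_of_lt_of_le i.2 hm⟩ : Fin n))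
  · intro a _; simp [a.2]
  · intro a _ b _ h
    have := congrArg Fin.val h
    simpa [Fin.ext_iff] using this
  · intro b hb
    simp only [Finset.mem_filter] at hb
    exact ⟨⟨(b : ℕ), hb.2⟩, Finset.mem_univ _, Fin.ext rfl⟩

section Count
variable {n : ℕ} {M : Fin n → Fin n → Option (Fin n)}

lemma row_card_add (hM : IsPLS M) (r : Fin n) :
    (rowS M r).card + (Finset.univ.filter fun c => M r c = none).card = n := by
  rw [rowS_card hM]
  have h := Finset.card_filter_add_card_filter_not
    (s := (Finset.univ : Finset (Fin n))) (p := fun c => (M r c).isSome)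
  have h2 : (Finset.univ.filter fun c => ¬ (M r c).isSome) =
      (Finset.univ.filter fun c => M r c = none) := by
    apply Finset.filter_congr
    intro c _
    simp [Option.not_isSome_iff_eq_none]
  rw [h2] at h
  simpa using h

lemma col_card_add (hM : IsPLS M) (c : Fin n) :
    (colS M c).card + (Finset.univ.filter fun r => M r c = none).card = n := by
  rw [colS_card hM]
  have h := Finset.card_filter_add_card_filter_not
    (s := (Finset.univ : Finset (Fin n))) (p := fun r => (M r c).isSome)
  have h2 : (Finset.univ.filter fun r => ¬ (M r c).isSome) =
      (Finset.univ.filter fun r => M r c = none) := by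
    apply Finset.filter_congr
    intro r _
    simp [Option.not_isSome_iff_eq_none]
  rw [h2] at h
  simpa using h

lemma plsSize_eq_sum_row (hM : IsPLS M) :
    plsSize M = ∑ r, (rowS M r).card := by
  unfold plsSize
  rw [Finset.card_filter, Fintype.sum_prod_type]
  apply Finset.sum_congr rfl
  intro r _
  rw [rowS_card hM, Finset.card_filter]

lemma plsSize_eq_sum_col (hM : IsPLS M) :
    plsSize M = ∑ c, (colS M c).card := by
  unfold plsSize
  rw [Finset.card_filter, Fintype.sum_prod_type_right]
  apply Finset.sum_congr rfl
  intro c _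
  rw [colS_card hM, Finset.card_filter]

end Count

lemma key_counts {n : ℕ} (hn : 1 < n) {M : Fin n → Fin n → Option (Fin n)}
    (hM : IsMaximalPLS M) (hF : plsSize M = (n ^ 2 + 1) / 2) :
    (∀ r c, M r c = none → Disjoint (rowS M r) (colS M c)) ∧
    (∀ r, (rowS M r).card = n / 2 ∨ (rowS M r).card = n - n / 2) ∧
    (∀ c, (colS M c).card = n / 2 ∨ (colS M c).card = n - n / 2) := by
  classical
  set m := n / 2 with hmdef
  set w := n - n / 2 with hwdef
  have hmw : m + w = n := by omega
  have hm1 : 1 ≤ m := by omega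
  set Emp : Finset (Fin n × Fin n) :=
    Finset.univ.filter (fun rc => M rc.1 rc.2 = none) with hEmp
  set f : Fin n → ℕ := fun r => (rowS M r).card with hf
  set g : Fin n → ℕ := fun c => (colS M c).card with hg
  set er : Fin n → ℕ := fun r => (Finset.univ.filter fun c => M r c = none).card with her
  set ec : Fin n → ℕ := fun c => (Finset.univ.filter fun r => M r c = none).card with hec
  have hfer : ∀ r, f r + er r = n := fun r => row_card_add hM.1 r
  have hgec : ∀ c, g c + ec c = n := fun c => col_card_add hM.1 c
  have hunion : ∀ rc ∈ Emp, rowS M rc.1 ∪ colS M rc.2 = Finset.univ := by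
    intro rc hrc
    simp only [hEmp, Finset.mem_filter] at hrc
    apply Finset.eq_univ_of_forall
    intro s
    rcases max_union hM hrc.2 s with h | h
    · exact Finset.mem_union_left _ h
    · exact Finset.mem_union_right _ h
  have hcell : ∀ rc ∈ Emp, n + ((rowS M rc.1) ∩ (colS M rc.2)).card = f rc.1 + g rc.2 := by
    intro rc hrc
    have := Finset.card_union_add_card_inter (rowS M rc.1) (colS M rc.2)
    rw [hunion rc hrc] at this
    simpa using this
  set T : ℕ := ∑ rc ∈ Emp, ((rowS M rc.1) ∩ (colS M rc.2)).card with hT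
  have hsum1 : ∑ rc ∈ Emp, (f rc.1 + g rc.2) = n * Emp.card + T := by
    have h1 : ∑ rc ∈ Emp, (f rc.1 + g rc.2) =
        ∑ rc ∈ Emp, (n + ((rowS M rc.1) ∩ (colS M rc.2)).card) :=
      Finset.sum_congr rfl fun rc hrc => (hcell rc hrc).symm
    rw [h1, Finset.sum_add_distrib, Finset.sum_const, smul_eq_mul, hT, mul_comm]
  have hsumf : ∑ rc ∈ Emp, f rc.1 = ∑ r, er r * f r := by
    rw [hEmp, Finset.sum_filter, Fintype.sum_prod_type]
    apply Finset.sum_congr rfl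
    intro r _
    show ∑ c : Fin n, (if M r c = none then f r else 0) = er r * f r
    rw [← Finset.sum_filter, Finset.sum_const, smul_eq_mul]
  have hsumg : ∑ rc ∈ Emp, g rc.2 = ∑ c, ec c * g c := by
    rw [hEmp, Finset.sum_filter, Fintype.sum_prod_type_right]
    apply Finset.sum_congr rfl
    intro c _
    show ∑ r : Fin n, (if M r c = none then g c else 0) = ec c * g c
    rw [← Finset.sum_filter, Finset.sum_const, smul_eq_mul]
  have hiden : n * Emp.card + T = (∑ r, er r * f r) + (∑ c, ec c * g c) := by
    rw [← hsumf, ← hsumg, ← Finset.sum_add_distrib, hsum1]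
  set K := m * w with hK
  have hquadr : ∀ r, er r * f r ≤ K ∧ (er r * f r = K → f r = m ∨ f r = w) := by
    intro r
    have h1 : f r ≤ n := by have := hfer r; omega
    have h2 : er r = n - f r := by have := hfer r; omega
    have h3 : n - m = w := by omega
    obtain ⟨hle, heq⟩ := quad_le_nat hmdef h1
    rw [h3] at hle heq
    constructor
    · rw [h2, mul_comm]; exact hle
    · intro he
      rw [h2, mul_comm] at he
      rcases heq he with h | h
      · left; exact h
      · right; omega
  have hquadc : ∀ c, ec c * g c ≤ K ∧ (ec c * g c = K → g c = m ∨ g c = w) := by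
    intro c
    have h1 : g c ≤ n := by have := hgec c; omega
    have h2 : ec c = n - g c := by have := hgec c; omega
    have h3 : n - m = w := by omega
    obtain ⟨hle, heq⟩ := quad_le_nat hmdef h1
    rw [h3] at hle heq
    constructor
    · rw [h2, mul_comm]; exact hle
    · intro he
      rw [h2, mul_comm] at he
      rcases heq he with h | h
      · left; exact h
      · right; omega
  have hRle : ∑ r, er r * f r ≤ n * K := by
    calc ∑ r, er r * f r ≤ ∑ _r : Fin n, K :=
          Finset.sum_le_sum (fun r _ => (hquadr r).1)
      _ = n * K := by
          rw [Finset.sum_const, Finset.card_univ, Fintype.card_fin, smul_eq_mul]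
  have hCle : ∑ c, ec c * g c ≤ n * K := by
    calc ∑ c, ec c * g c ≤ ∑ _c : Fin n, K :=
          Finset.sum_le_sum (fun c _ => (hquadc c).1)
      _ = n * K := by
          rw [Finset.sum_const, Finset.card_univ, Fintype.card_fin, smul_eq_mul]
  have hEcard : plsSize M + Emp.card = n ^ 2 := by
    have h := Finset.card_filter_add_card_filter_not
      (s := (Finset.univ : Finset (Fin n × Fin n)))
      (p := fun rc => (M rc.1 rc.2).isSome)
    have h2 : (Finset.univ.filter fun rc : Fin n × Fin n => ¬ (M rc.1 rc.2).isSome) = Emp := by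
      rw [hEmp]
      apply Finset.filter_congr
      intro rc _
      simp [Option.not_isSome_iff_eq_none]
    rw [h2] at h
    have h3 : (Finset.univ : Finset (Fin n × Fin n)).card = n ^ 2 := by
      rw [Finset.card_univ]
      simp [sq]
    rw [h3] at h
    exact h
  have hFval : plsSize M = m * m + w * w := by
    have hpar : n = 2 * m ∨ n = 2 * m + 1 := by omega
    rcases hpar with hp | hp
    · have hwm : w = m := by omega
      have e1 : n ^ 2 = 4 * (m * m) := by rw [hp]; ring
      rw [hF, e1, hwm]
      generalize m * m = k
      omega
    · have hwm : w = m + 1 := by omega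
      have e1 : n ^ 2 = 4 * (m * m) + 4 * m + 1 := by rw [hp]; ring
      have e2 : w * w = m * m + 2 * m + 1 := by rw [hwm]; ring
      rw [hF, e1, e2]
      generalize m * m = k
      omega
  have hEval : Emp.card = 2 * K := by
    have hsq : n ^ 2 = m * m + 2 * K + w * w := by rw [hK, ← hmw]; ring
    rw [hFval, hsq] at hEcard
    clear_value K
    generalize m * m = a at hEcard
    generalize w * w = b at hEcard
    omega
  have hNE : n * Emp.card = n * K + n * K := by rw [hEval]; ring
  rw [hNE] at hiden
  have hT0 : T = 0 := by linarith
  have hRsum : ∑ r, er r * f r = n * K := by linarith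
  have hCsum : ∑ c, ec c * g c = n * K := by linarith
  have hrowEq : ∀ r, er r * f r = K := by
    intro r
    by_contra hne
    have hlt : er r * f r < K := lt_of_le_of_ne (hquadr r).1 hne
    have hstrict : ∑ r', er r' * f r' < ∑ _r : Fin n, K :=
      Finset.sum_lt_sum (fun i _ => (hquadr i).1) ⟨r, Finset.mem_univ r, hlt⟩
    rw [Finset.sum_const, Finset.card_univ, Fintype.card_fin, smul_eq_mul] at hstrict
    omega
  have hcolEq : ∀ c, ec c * g c = K := by
    intro c
    by_contra hne
    have hlt : ec c * g c < K := lt_of_le_of_ne (hquadc c).1 hne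
    have hstrict : ∑ c', ec c' * g c' < ∑ _c : Fin n, K :=
      Finset.sum_lt_sum (fun i _ => (hquadc i).1) ⟨c, Finset.mem_univ c, hlt⟩
    rw [Finset.sum_const, Finset.card_univ, Fintype.card_fin, smul_eq_mul] at hstrict
    omega
  refine ⟨?_, fun r => (hquadr r).2 (hrowEq r), fun c => (hquadc c).2 (hcolEq c)⟩
  intro r c hnone
  have hmem : (r, c) ∈ Emp := by
    rw [hEmp]
    simp [hnone]
  have hzero : ((rowS M r) ∩ (colS M c)).card = 0 := by
    have hs : ∑ rc ∈ Emp, ((rowS M rc.1) ∩ (colS M rc.2)).card = 0 := by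
      rw [← hT]; exact hT0
    exact Finset.sum_eq_zero_iff.1 hs (r, c) hmem
  rw [Finset.disjoint_iff_inter_eq_empty]
  exact Finset.card_eq_zero.1 hzero

set_option maxHeartbeats 1000000 in
lemma structure_lemma {n : ℕ} (hn : 1 < n) {M : Fin n → Fin n → Option (Fin n)}
    (hM : IsMaximalPLS M) (hF : plsSize M = (n ^ 2 + 1) / 2) :
    ∃ A : Finset (Fin n), A.card = n / 2 ∧
      (∀ r, rowS M r = A ∨ rowS M r = Aᶜ) ∧
      (∀ c, colS M c = A ∨ colS M c = Aᶜ) ∧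
      (∀ r c, (M r c).isSome ↔
        ((rowS M r = A ∧ colS M c = A) ∨ (rowS M r = Aᶜ ∧ colS M c = Aᶜ))) ∧
      (Finset.univ.filter fun r => rowS M r = A).card = n / 2 ∧
      (Finset.univ.filter fun c => colS M c = A).card = n / 2 := by
  classical
  set m := n / 2 with hmdef
  set w := n - n / 2 with hwdef
  have hmw : m + w = n := by omega
  have hm1 : 1 ≤ m := by omega
  have hmlew : m ≤ w := by omega
  obtain ⟨Hdis, Hrow, Hcol⟩ := key_counts hn hM hF
  -- empty cell: column symbols are the complement of row symbols
  have H1 : ∀ r c, M r c = none → colS M c = (rowS M r)ᶜ := by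
    intro r c hnone
    ext s
    rw [Finset.mem_compl]
    constructor
    · intro hs hr
      exact (Finset.disjoint_left.1 (Hdis r c hnone)) hr hs
    · intro hs
      rcases max_union hM hnone s with h | h
      · exact absurd h hs
      · exact h
  have H2 : ∀ r c, (M r c).isSome ↔ colS M c ≠ (rowS M r)ᶜ := by
    intro r c
    constructor
    · intro hsome hEq
      obtain ⟨s, hs⟩ := Option.isSome_iff_exists.1 hsome
      have h1 : s ∈ rowS M r := mem_rowS.2 ⟨c, hs⟩
      have h2 : s ∈ colS M c := mem_colS.2 ⟨r, hs⟩
      rw [hEq, Finset.mem_compl] at h2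
      exact h2 h1
    · intro hne
      by_contra hns
      exact hne (H1 r c (Option.not_isSome_iff_eq_none.1 hns))
  -- plsSize value
  have hFval : plsSize M = m * m + w * w := by
    have hpar : n = 2 * m ∨ n = 2 * m + 1 := by omega
    rcases hpar with hp | hp
    · have hwm : w = m := by omega
      have e1 : n ^ 2 = 4 * (m * m) := by rw [hp]; ring
      rw [hF, e1, hwm]
      generalize m * m = k
      omega
    · have hwm : w = m + 1 := by omega
      have e1 : n ^ 2 = 4 * (m * m) + 4 * m + 1 := by rw [hp]; ring
      have e2 : w * w = m * m + 2 * m + 1 := by rw [hwm]; ring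
      rw [hF, e1, e2]
      generalize m * m = k
      omega
  -- find a light row
  have hr0 : ∃ r₀ : Fin n, (rowS M r₀).card = m := by
    by_contra hno
    push_neg at hno
    have hall : ∀ r, (rowS M r).card = w := by
      intro r
      rcases Hrow r with h | h
      · exact absurd h (hno r)
      · exact h
    have hmw' : m ≠ w := by
      intro he
      exact hno ⟨0, by omega⟩ (he ▸ hall _)
    have hsum : plsSize M = n * w := by
      rw [plsSize_eq_sum_row hM.1]
      rw [Finset.sum_congr rfl (fun r _ => hall r), Finset.sum_const,
        Finset.card_univ, Fintype.card_fin, smul_eq_mul]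
    have hnw : n * w = m * w + w * w := by rw [← hmw]; ring
    rw [hFval, hnw] at hsum
    have : m * m = m * w := by
      have h2 : w * w ≤ m * w + w * w := Nat.le_add_left _ _
      omega
    have := Nat.eq_of_mul_eq_mul_left (by omega : 0 < m) this
    exact hmw' this
  obtain ⟨r₀, hA⟩ := hr0
  set A := rowS M r₀ with hAdef
  have hAc : Aᶜ.card = w := by
    rw [Finset.card_compl, hA]
    simp only [Fintype.card_fin]
    omega
  -- characterize the empty cells of row r₀
  have hXchar : ∀ c, M r₀ c = none ↔ colS M c = Aᶜ := by
    intro c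
    constructor
    · intro h; exact H1 r₀ c h
    · intro h
      by_contra hne
      have hsome : (M r₀ c).isSome := Option.ne_none_iff_isSome.1 hne
      exact (H2 r₀ c).1 hsome h
  have hYchar : ∀ c, (M r₀ c).isSome ↔ colS M c ≠ Aᶜ := fun c => H2 r₀ c
  set Y : Finset (Fin n) := Finset.univ.filter (fun c => (M r₀ c).isSome) with hYdef
  set X : Finset (Fin n) := Finset.univ.filter (fun c => M r₀ c = none) with hXdef
  have hYcard : Y.card = m := by rw [← rowS_card hM.1 r₀]; exact hA
  have hXcard : X.card = w := by
    have := row_card_add hM.1 r₀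
    rw [hA] at this
    rw [hXdef]
    omega
  -- column sums: every filled column of r₀ has m symbols
  have hYg : ∀ c ∈ Y, (colS M c).card = m := by
    intro c hc
    rcases Hcol c with h | h
    · exact h
    · -- g c = w; fine if m = w, otherwise contradiction by counting
      by_cases hmw' : m = w
      · rw [h, hmw']
      · exfalso
        have hsplit : ∑ c' ∈ Y, (colS M c').card + ∑ c' ∈ X, (colS M c').card
            = m * m + w * w := by
          rw [← hFval, plsSize_eq_sum_col hM.1]
          rw [hYdef, hXdef]
          have hX2 : (Finset.univ.filter (fun c' => M r₀ c' = none)) =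
              (Finset.univ.filter (fun c' => ¬ (M r₀ c').isSome)) := by
            apply Finset.filter_congr
            intro c' _
            simp [Option.not_isSome_iff_eq_none]
          rw [hX2, Finset.sum_filter_add_sum_filter_not]
        have hXsum : ∑ c' ∈ X, (colS M c').card = w * w := by
          have : ∀ c' ∈ X, (colS M c').card = w := by
            intro c' hc'
            rw [hXdef, Finset.mem_filter] at hc'
            rw [hXchar c' |>.1 hc'.2, hAc]
          rw [Finset.sum_congr rfl this, Finset.sum_const, smul_eq_mul, hXcard]
        have hYsum : ∑ c' ∈ Y, (colS M c').card = m * m := by omega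
        have hlb : ∀ c' ∈ Y, m ≤ (colS M c').card := by
          intro c' _
          rcases Hcol c' with h' | h' <;> omega
        have hstrict : ∑ _c' ∈ Y, m < ∑ c' ∈ Y, (colS M c').card := by
          apply Finset.sum_lt_sum hlb
          exact ⟨c, hc, by omega⟩
        rw [Finset.sum_const, smul_eq_mul, hYcard, hYsum] at hstrict
        omega
  -- column c₀ empty in row r₀ gives rows of type A
  have hXne : X.Nonempty := Finset.card_pos.1 (by omega)
  obtain ⟨c₀, hc₀X⟩ := hXne
  have hc₀ : M r₀ c₀ = none := by
    rw [hXdef, Finset.mem_filter] at hc₀X; exact hc₀X.2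
  have hc₀col : colS M c₀ = Aᶜ := (hXchar c₀).1 hc₀
  have hrowchar : ∀ (c : Fin n) (D : Finset (Fin n)), colS M c = Dᶜ →
      ∀ r, (M r c = none ↔ rowS M r = D) := by
    intro c D hD r
    constructor
    · intro h
      have := H1 r c h
      rw [hD] at this
      exact (compl_injective this).symm
    · intro h
      by_contra hne
      have hsome : (M r c).isSome := Option.ne_none_iff_isSome.1 hne
      exact (H2 r c).1 hsome (by rw [hD, h])
  have hemptycol_card : ∀ c : Fin n,
      (colS M c).card + (Finset.univ.filter fun r => M r c = none).card = n :=
    fun c => col_card_add hM.1 c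
  set R1 : Finset (Fin n) := Finset.univ.filter (fun r => rowS M r = A) with hR1def
  have hR1card : R1.card = m := by
    have h1 := hemptycol_card c₀
    rw [hc₀col, hAc] at h1
    have h2 : (Finset.univ.filter fun r => M r c₀ = none) = R1 := by
      rw [hR1def]
      apply Finset.filter_congr
      intro r _
      exact hrowchar c₀ A hc₀col r
    rw [h2] at h1
    omega
  -- column c₁ filled in row r₀ gives rows of type B
  have hYne : Y.Nonempty := Finset.card_pos.1 (by omega)
  obtain ⟨c₁, hc₁Y⟩ := hYne
  have hgc₁ : (colS M c₁).card = m := hYg c₁ hc₁Y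
  set B : Finset (Fin n) := (colS M c₁)ᶜ with hBdef
  have hBcard : B.card = w := by
    rw [hBdef, Finset.card_compl, hgc₁]
    simp only [Fintype.card_fin]
    omega
  have hc₁col : colS M c₁ = Bᶜ := by rw [hBdef, compl_compl]
  set R2 : Finset (Fin n) := Finset.univ.filter (fun r => rowS M r = B) with hR2def
  have hR2card : R2.card = w := by
    have h1 := hemptycol_card c₁
    rw [hgc₁] at h1
    have h2 : (Finset.univ.filter fun r => M r c₁ = none) = R2 := by
      rw [hR2def]
      apply Finset.filter_congr
      intro r _
      exact hrowchar c₁ B hc₁col r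
    rw [h2] at h1
    omega
  have hAB : A ≠ B := by
    intro hABeq
    have hfill : (M r₀ c₁).isSome := by
      rw [hYdef, Finset.mem_filter] at hc₁Y; exact hc₁Y.2
    have : M r₀ c₁ ≠ none := Option.isSome_iff_ne_none.1 hfill
    exact this ((hrowchar c₁ B hc₁col r₀).2 (by rw [← hAdef, hABeq]))
  have hdicho : ∀ r, rowS M r = A ∨ rowS M r = B := by
    have hdisj : Disjoint R1 R2 := by
      rw [Finset.disjoint_left]
      intro r h1 h2
      rw [hR1def, Finset.mem_filter] at h1
      rw [hR2def, Finset.mem_filter] at h2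
      exact hAB (h1.2 ▸ h2.2 ▸ rfl)
    have huniv : R1 ∪ R2 = Finset.univ := by
      apply Finset.eq_univ_of_card
      rw [Finset.card_union_of_disjoint hdisj, hR1card, hR2card]
      simp [hmw]
    intro r
    have : r ∈ R1 ∪ R2 := huniv ▸ Finset.mem_univ r
    rcases Finset.mem_union.1 this with h | h
    · left; rw [hR1def, Finset.mem_filter] at h; exact h.2
    · right; rw [hR2def, Finset.mem_filter] at h; exact h.2
  have hYB : ∀ c ∈ Y, colS M c = Bᶜ := by
    intro c hc
    have hgc : (colS M c).card = m := hYg c hc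
    set ER : Finset (Fin n) := Finset.univ.filter (fun r => M r c = none) with hERdef
    have hERcard : ER.card = w := by
      have := hemptycol_card c
      rw [hgc] at this
      rw [hERdef]
      omega
    have hsub : ER ⊆ R2 := by
      intro r hr
      rw [hERdef, Finset.mem_filter] at hr
      have hcompl := H1 r c hr.2
      rcases hdicho r with h | h
      · exfalso
        rw [h] at hcompl
        have : (M r₀ c).isSome := by
          rw [hYdef, Finset.mem_filter] at hc; exact hc.2
        exact (hYchar c).1 this hcompl
      · rw [hR2def, Finset.mem_filter]; exact ⟨Finset.mem_univ r, h⟩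
    have hER2 : ER = R2 := Finset.eq_of_subset_of_card_le hsub (by omega)
    have hR2ne : R2.Nonempty := Finset.card_pos.1 (by omega)
    obtain ⟨r', hr'⟩ := hR2ne
    have hr'B : rowS M r' = B := by
      rw [hR2def, Finset.mem_filter] at hr'; exact hr'.2
    have hr'none : M r' c = none := by
      rw [← hER2, hERdef, Finset.mem_filter] at hr'; exact hr'.2
    have := H1 r' c hr'none
    rw [hr'B] at this
    exact this
  have hBA : B = Aᶜ := by
    have hsub : B ⊆ Aᶜ := by
      intro s hs
      have hR2ne : R2.Nonempty := Finset.card_pos.1 (by omega)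
      obtain ⟨r', hr'⟩ := hR2ne
      have hr'B : rowS M r' = B := by
        rw [hR2def, Finset.mem_filter] at hr'; exact hr'.2
      have hsrow : s ∈ rowS M r' := by rw [hr'B]; exact hs
      obtain ⟨c, hcs⟩ := mem_rowS.1 hsrow
      have hscol : s ∈ colS M c := mem_colS.2 ⟨r', hcs⟩
      by_cases hcY : (M r₀ c).isSome
      · exfalso
        have : colS M c = Bᶜ := hYB c (by rw [hYdef, Finset.mem_filter]; exact ⟨Finset.mem_univ c, hcY⟩)
        rw [this, Finset.mem_compl] at hscol
        exact hscol hs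
      · have hcnone : M r₀ c = none := Option.not_isSome_iff_eq_none.1 hcY
        have : colS M c = Aᶜ := (hXchar c).1 hcnone
        rw [this] at hscol
        exact hscol
    apply Finset.eq_of_subset_of_card_le hsub
    rw [hBcard, hAc]
  have hANA : A ≠ Aᶜ := by
    obtain ⟨s, hs⟩ := Finset.card_pos.1 (by omega : 0 < A.card)
    intro h
    have h2 := h ▸ hs
    rw [Finset.mem_compl] at h2
    exact h2 hs
  have hANA' : Aᶜ ≠ A := hANA.symm
  have hrdicho : ∀ r, rowS M r = A ∨ rowS M r = Aᶜ := by
    intro r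
    rcases hdicho r with h | h
    · left; exact h
    · right; rw [← hBA]; exact h
  have hcdicho : ∀ c, colS M c = A ∨ colS M c = Aᶜ := by
    intro c
    by_cases hcY : (M r₀ c).isSome
    · left
      have := hYB c (by rw [hYdef, Finset.mem_filter]; exact ⟨Finset.mem_univ c, hcY⟩)
      rw [hBA, compl_compl] at this
      exact this
    · right
      exact (hXchar c).1 (Option.not_isSome_iff_eq_none.1 hcY)
  have hYA : (Finset.univ.filter fun c => colS M c = A) = Y := by
    rw [hYdef]
    apply Finset.filter_congr
    intro c _
    constructor
    · intro h
      by_contra hns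
      have := (hXchar c).1 (Option.not_isSome_iff_eq_none.1 hns)
      rw [h] at this
      exact hANA this
    · intro h
      have := hYB c (by rw [hYdef, Finset.mem_filter]; exact ⟨Finset.mem_univ c, h⟩)
      rw [hBA, compl_compl] at this
      exact this
  refine ⟨A, hA, hrdicho, hcdicho, ?_, hR1card, by rw [hYA]; exact hYcard⟩
  intro r c
  rw [H2 r c]
  rcases hrdicho r with hr | hr <;> rcases hcdicho c with hc | hc <;> rw [hr, hc]
  · exact ⟨fun _ => Or.inl ⟨rfl, rfl⟩, fun _ => hANA⟩
  · constructor
    · intro h; exact absurd rfl h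
    · rintro (⟨h1, h2⟩ | ⟨h1, h2⟩)
      · exact absurd h2.symm hANA
      · exact absurd h1 hANA
  · constructor
    · intro h; exfalso; apply h; rw [compl_compl]
    · rintro (⟨h1, h2⟩ | ⟨h1, h2⟩)
      · exact absurd h1 hANA'
      · exact absurd h2 hANA
  · constructor
    · intro _; exact Or.inr ⟨rfl, rfl⟩
    · intro _
      rw [compl_compl]
      exact hANA'


/-- A maximal PLS(n), n > 1, with ⌈n²/2⌉ filled cells is, up to row and column
permutations, two Latin squares on disjoint symbol sets on the leading diagonal,
of orders m = ⌊n/2⌋ and n - m, all other cells being empty. -/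
theorem stmt_2 {n : ℕ} (hn : 1 < n) (M : Fin n → Fin n → Option (Fin n))
    (hM : IsMaximalPLS M) (hF : plsSize M = (n ^ 2 + 1) / 2) :
    ∃ (σ τ : Equiv.Perm (Fin n)) (S₁ S₂ : Finset (Fin n)),
      Disjoint S₁ S₂ ∧ S₁.card = n / 2 ∧ S₂.card = n - n / 2 ∧
      (∀ r c : Fin n, (M (σ r) (τ c)).isSome ↔
        (((r : ℕ) < n / 2 ∧ (c : ℕ) < n / 2) ∨ (n / 2 ≤ (r : ℕ) ∧ n / 2 ≤ (c : ℕ)))) ∧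
      (∀ r c : Fin n, (r : ℕ) < n / 2 → (c : ℕ) < n / 2 →
        ∀ s, M (σ r) (τ c) = some s → s ∈ S₁) ∧
      (∀ r : Fin n, (r : ℕ) < n / 2 → ∀ s ∈ S₁,
        ∃ c : Fin n, (c : ℕ) < n / 2 ∧ M (σ r) (τ c) = some s) ∧
      (∀ c : Fin n, (c : ℕ) < n / 2 → ∀ s ∈ S₁,
        ∃ r : Fin n, (r : ℕ) < n / 2 ∧ M (σ r) (τ c) = some s) ∧
      (∀ r c : Fin n, n / 2 ≤ (r : ℕ) → n / 2 ≤ (c : ℕ) →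
        ∀ s, M (σ r) (τ c) = some s → s ∈ S₂) ∧
      (∀ r : Fin n, n / 2 ≤ (r : ℕ) → ∀ s ∈ S₂,
        ∃ c : Fin n, n / 2 ≤ (c : ℕ) ∧ M (σ r) (τ c) = some s) ∧
      (∀ c : Fin n, n / 2 ≤ (c : ℕ) → ∀ s ∈ S₂,
        ∃ r : Fin n, n / 2 ≤ (r : ℕ) ∧ M (σ r) (τ c) = some s) := by
  classical
  obtain ⟨A, hA, hrd, hcd, hiff, hRcard, hCcard⟩ := structure_lemma hn hM hF
  have hANA : A ≠ Aᶜ := by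
    obtain ⟨s, hs⟩ := Finset.card_pos.1 (by omega : 0 < A.card)
    intro h
    have h2 := h ▸ hs
    rw [Finset.mem_compl] at h2
    exact h2 hs
  have hcardp : Fintype.card {x : Fin n // (x : ℕ) < n / 2} = n / 2 := by
    rw [Fintype.card_subtype]
    exact card_filter_lt (by omega)
  obtain ⟨σ, hσ⟩ := exists_perm_pred (fun r : Fin n => (r : ℕ) < n / 2)
    (fun r => rowS M r = A) (by rw [hcardp, Fintype.card_subtype, hRcard])
  obtain ⟨τ, hτ⟩ := exists_perm_pred (fun c : Fin n => (c : ℕ) < n / 2)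
    (fun c => colS M c = A) (by rw [hcardp, Fintype.card_subtype, hCcard])
  have hσ2 : ∀ x : Fin n, n / 2 ≤ (x : ℕ) ↔ rowS M (σ x) = Aᶜ := by
    intro x
    constructor
    · intro h
      rcases hrd (σ x) with h' | h'
      · exact absurd ((hσ x).2 h') (by omega)
      · exact h'
    · intro h
      by_contra hlt
      have := (hσ x).1 (by omega)
      rw [this] at h
      exact hANA h
  have hτ2 : ∀ x : Fin n, n / 2 ≤ (x : ℕ) ↔ colS M (τ x) = Aᶜ := by
    intro x
    constructor
    · intro h
      rcases hcd (τ x) with h' | h'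
      · exact absurd ((hτ x).2 h') (by omega)
      · exact h'
    · intro h
      by_contra hlt
      have := (hτ x).1 (by omega)
      rw [this] at h
      exact hANA h
  refine ⟨σ, τ, A, Aᶜ, disjoint_compl_right, hA, ?_, ?_, ?_, ?_, ?_, ?_, ?_, ?_⟩
  · rw [Finset.card_compl, hA, Fintype.card_fin]
  · intro r c
    rw [hiff (σ r) (τ c)]
    exact or_congr (and_congr (hσ r).symm (hτ c).symm)
      (and_congr (hσ2 r).symm (hτ2 c).symm)
  · intro r c hr _ s hs
    have : s ∈ rowS M (σ r) := mem_rowS.2 ⟨τ c, hs⟩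
    rwa [(hσ r).1 hr] at this
  · intro r hr s hsA
    have hsrow : s ∈ rowS M (σ r) := by rw [(hσ r).1 hr]; exact hsA
    obtain ⟨c', hc'⟩ := mem_rowS.1 hsrow
    refine ⟨τ.symm c', ?_, by rw [Equiv.apply_symm_apply]; exact hc'⟩
    apply (hτ (τ.symm c')).2
    rw [Equiv.apply_symm_apply]
    rcases hcd c' with h | h
    · exact h
    · exfalso
      have : s ∈ colS M c' := mem_colS.2 ⟨σ r, hc'⟩
      rw [h, Finset.mem_compl] at this
      exact this hsA
  · intro c hc s hsA
    have hscol : s ∈ colS M (τ c) := by rw [(hτ c).1 hc]; exact hsA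
    obtain ⟨r', hr'⟩ := mem_colS.1 hscol
    refine ⟨σ.symm r', ?_, by rw [Equiv.apply_symm_apply]; exact hr'⟩
    apply (hσ (σ.symm r')).2
    rw [Equiv.apply_symm_apply]
    rcases hrd r' with h | h
    · exact h
    · exfalso
      have : s ∈ rowS M r' := mem_rowS.2 ⟨τ c, hr'⟩
      rw [h, Finset.mem_compl] at this
      exact this hsA
  · intro r c hr _ s hs
    have : s ∈ rowS M (σ r) := mem_rowS.2 ⟨τ c, hs⟩
    rwa [(hσ2 r).1 hr] at this
  · intro r hr s hsA
    have hsrow : s ∈ rowS M (σ r) := by rw [(hσ2 r).1 hr]; exact hsA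
    obtain ⟨c', hc'⟩ := mem_rowS.1 hsrow
    refine ⟨τ.symm c', ?_, by rw [Equiv.apply_symm_apply]; exact hc'⟩
    apply (hτ2 (τ.symm c')).2
    rw [Equiv.apply_symm_apply]
    rcases hcd c' with h | h
    · exfalso
      have : s ∈ colS M c' := mem_colS.2 ⟨σ r, hc'⟩
      rw [h] at this
      rw [Finset.mem_compl] at hsA
      exact hsA this
    · exact h
  · intro c hc s hsA
    have hscol : s ∈ colS M (τ c) := by rw [(hτ2 c).1 hc]; exact hsA
    obtain ⟨r', hr'⟩ := mem_colS.1 hscol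
    refine ⟨σ.symm r', ?_, by rw [Equiv.apply_symm_apply]; exact hr'⟩
    apply (hσ2 (σ.symm r')).2
    rw [Equiv.apply_symm_apply]
    rcases hrd r' with h | h
    · exfalso
      have : s ∈ rowS M r' := mem_rowS.2 ⟨τ c, hr'⟩
      rw [h] at this
      rw [Finset.mem_compl] at hsA
      exact hsA this
    · exact h
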